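/- For any convex body H in the plane and any point P on its boundary with adjacent boundary points forming triangles with a perturbed point P' where |PP'| ≤ δ and the diameter of H is at most D, replacing P by P' changes the convex hull area by at most D·δ/2. -/

import Mathlib

open MeasureTheory Metric RealInnerProductSpace Set

private lemma slice_eq_Icc (B : Set (ℝ×ℝ)) (hB : IsCompact B) (hBc : Convex ℝ B) (s : ℝ)
    (hne : (Prod.mk s ⁻¹' B).Nonempty) :
    Prod.mk s ⁻¹' B = Icc (sInf (Prod.mk s ⁻¹' B)) (sSup (Prod.mk s ⁻¹' B)) := by
  set Bs := Prod.mk s ⁻¹' B with hBs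
  have hcomp : IsCompact Bs := by
    have h : Bs = Prod.snd '' (B ∩ {q : ℝ×ℝ | q.1 = s}) := by
      ext x
      constructor
      · intro h; exact ⟨(s, x), ⟨h, rfl⟩, rfl⟩
      · rintro ⟨⟨a, b⟩, ⟨hb, (rfl : a = s)⟩, rfl⟩; exact hb
    rw [h]
    exact ((hB.inter_right (isClosed_eq continuous_fst continuous_const))).image
      continuous_snd
  have hconv : Convex ℝ Bs := by
    intro x hx y hy a b ha hb hab
    have h2 := hBc hx hy ha hb hab
    have hs : a * s + b * s = s := by rw [← add_mul, hab, one_mul]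
    simpa [Bs, Prod.smul_mk, hs] using h2
  apply Subset.antisymm
  · intro x hx
    exact ⟨csInf_le hcomp.bddBelow hx, le_csSup hcomp.bddAbove hx⟩
  · have h1 : sInf Bs ∈ Bs := hcomp.sInf_mem hne
    have h2 : sSup Bs ∈ Bs := hcomp.sSup_mem hne
    exact hconv.ordConnected.out h1 h2


private lemma sq_half_div (x : ℝ) : x^2/2/x = x/2 := by
  rcases eq_or_ne x 0 with h | h
  · simp [h]
  · field_simp

private lemma combo_bounds (t a p m M s : ℝ) (ht0 : 0 ≤ t) (ht1 : t ≤ 1)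
    (hs : s = (1-t)*a + t*p) (ha1 : m ≤ a) (ha2 : a ≤ M) (hp1 : m ≤ p) (hp2 : p ≤ M) :
    (m ≤ s ∧ s ≤ M) ∧ (1-t)*m + t*p ≤ s ∧ s ≤ (1-t)*M + t*p := by
  refine ⟨⟨?_, ?_⟩, ?_, ?_⟩ <;> nlinarith

private lemma hull_decomp (S : Set (EuclideanSpace ℝ (Fin 2))) (P P' z : EuclideanSpace ℝ (Fin 2))
    (hz : z ∈ convexHull ℝ (S ∪ {P, P'})) :
    ∃ t : ℝ, ∃ y ∈ convexHull ℝ (S ∪ {P}), 0 ≤ t ∧ t ≤ 1 ∧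
      z = ((1-t) • y + t • P) + t • (P' - P) := by
  have hne : (S ∪ {P}).Nonempty := ⟨P, Or.inr rfl⟩
  have hrw : S ∪ {P, P'} = insert P' (S ∪ {P}) := by ext x; simp; tauto
  rw [hrw, convexHull_insert hne, mem_convexJoin] at hz
  obtain ⟨x, hx, y, hy, hseg⟩ := hz
  rw [mem_singleton_iff] at hx; subst hx
  obtain ⟨a, b2, ha, hb2, hab, hzeq⟩ := hseg
  refine ⟨a, y, hy, ha, by linarith, ?_⟩
  have hb2a : b2 = 1 - a := by linarith
  rw [← hzeq, hb2a]
  module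

set_option maxHeartbeats 2000000 in
private lemma core_ineq (S : Set (EuclideanSpace ℝ (Fin 2))) (hS : S.Finite)
    (P P' : EuclideanSpace ℝ (Fin 2)) (D δ : ℝ)
    (hD : Metric.diam (S ∪ {P, P'}) ≤ D) (hδ : dist P P' ≤ δ) :
    volume (convexHull ℝ (S ∪ {P, P'})) ≤
      volume (convexHull ℝ (S ∪ {P})) + ENNReal.ofReal (1/2 * D * δ) := by
  by_cases hPP : P' = P
  · subst hPP
    rw [pair_eq_singleton]
    exact le_self_add
  -- setup
  set K := convexHull ℝ (S ∪ {P, P'}) with hKdef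
  set H := convexHull ℝ (S ∪ {P}) with hHdef
  have hfinK : (S ∪ {P, P'}).Finite := hS.union (by simp)
  have hfinH : (S ∪ {P}).Finite := hS.union (finite_singleton P)
  have hKcomp : IsCompact K := hfinK.isCompact_convexHull ℝ
  have hHcomp : IsCompact H := hfinH.isCompact_convexHull ℝ
  have hHconv : Convex ℝ H := convex_convexHull ℝ _
  have hP : P ∈ H := subset_convexHull ℝ _ (Or.inr rfl)
  -- vectors
  set v : EuclideanSpace ℝ (Fin 2) := P' - P with hvdef
  have hv : v ≠ 0 := sub_ne_zero.2 hPP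
  set n := ‖v‖ with hndef
  have hn : 0 < n := norm_pos_iff.2 hv
  have hnd : n = dist P P' := by rw [dist_eq_norm']
  have hnδ : n ≤ δ := hnd ▸ hδ
  set v' : EuclideanSpace ℝ (Fin 2) := n⁻¹ • v with hv'def
  have hv'norm : ‖v'‖ = 1 := norm_smul_inv_norm hv
  set w : EuclideanSpace ℝ (Fin 2) := (WithLp.equiv 2 (Fin 2 → ℝ)).symm ![-(v' 1), v' 0]
    with hwdef
  have hw0 : w 0 = -(v' 1) := by rw [hwdef]; simp
  have hw1 : w 1 = v' 0 := by rw [hwdef]; simp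
  have hinner : ∀ x y : EuclideanSpace ℝ (Fin 2), ⟪x, y⟫ = x 0 * y 0 + x 1 * y 1 :=
    fun x y => by simp [PiLp.inner_apply, Fin.sum_univ_two]; ring
  have hwv' : ⟪w, v'⟫ = 0 := by rw [hinner, hw0, hw1]; ring
  have hv'w : ⟪v', w⟫ = 0 := by rw [real_inner_comm]; exact hwv'
  have hv'v' : ⟪v', v'⟫ = 1 := by
    rw [real_inner_self_eq_norm_mul_norm, hv'norm]; norm_num
  have hww : ⟪w, w⟫ = 1 := by
    have h2 := hv'v'
    rw [hinner] at h2 ⊢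
    rw [hw0, hw1]; nlinarith [h2]
  have hwnorm : ‖w‖ = 1 := by
    have h2 : ‖w‖ * ‖w‖ = 1 := by rw [← real_inner_self_eq_norm_mul_norm, hww]
    nlinarith [norm_nonneg w]
  have hveq : v = n • v' := by rw [hv'def, smul_inv_smul₀ hn.ne']
  have hwv : ⟪w, v⟫ = 0 := by rw [hveq, real_inner_smul_right, hwv', mul_zero]
  have hv'v : ⟪v', v⟫ = n := by rw [hveq, real_inner_smul_right, hv'v', mul_one]
  -- orthonormal basis and measure-preserving map
  have hon : Orthonormal ℝ ![w, v'] := by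
    refine orthonormal_iff_ite.2 fun i j => ?_
    fin_cases i <;> fin_cases j <;>
      simp [hww, hwv', hv'w, hv'v', hv'norm, hwnorm]
  have hsp : ⊤ ≤ Submodule.span ℝ (Set.range ![w, v']) :=
    (hon.linearIndependent.span_eq_top_of_card_eq_finrank (by simp)).ge
  set b : OrthonormalBasis (Fin 2) ℝ (EuclideanSpace ℝ (Fin 2)) :=
    OrthonormalBasis.mk hon hsp with hbdef
  set Φ : EuclideanSpace ℝ (Fin 2) ≃ᵐ ℝ × ℝ :=
    (b.measurableEquiv.trans (MeasurableEquiv.toLp 2 (Fin 2 → ℝ)).symm).trans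
      (MeasurableEquiv.piFinTwo fun _ => ℝ) with hΦdef
  have hmp : MeasurePreserving Φ volume volume :=
    ((measurePreserving_piFinTwo _).comp
      ((EuclideanSpace.volume_preserving_symm_measurableEquiv_toLp _).comp
        b.measurePreserving_measurableEquiv) : _)
  have hΦ : ∀ z : EuclideanSpace ℝ (Fin 2), Φ z = (⟪w, z⟫, ⟪v', z⟫) := by
    intro z
    show (b.repr z 0, b.repr z 1) = _
    rw [b.repr_apply_apply, b.repr_apply_apply, hbdef]
    simp [OrthonormalBasis.coe_mk]
  set ψ : EuclideanSpace ℝ (Fin 2) →L[ℝ] ℝ × ℝ := (innerSL ℝ w).prod (innerSL ℝ v')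
    with hψdef
  have hψ : ∀ z, ψ z = (⟪w, z⟫, ⟪v', z⟫) := fun z => rfl
  have hψΦ : ⇑Φ = ⇑ψ := funext fun z => by rw [hΦ z]; rfl
  have hψinj : Function.Injective ψ := by
    rw [← hψΦ]; exact Φ.injective
  clear_value b Φ
  set A := ψ '' K with hAdef
  set B := ψ '' H with hBdef
  have hAcomp : IsCompact A := hKcomp.image ψ.continuous
  have hBcomp : IsCompact B := hHcomp.image ψ.continuous
  have hAmeas : MeasurableSet A := hAcomp.measurableSet
  have hBmeas : MeasurableSet B := hBcomp.measurableSet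
  have hBconv : Convex ℝ B := by exact hHconv.linear_image ψ.toLinearMap
  have hvolA : volume A = volume K := by
    have h2 := hmp.measure_preimage hAmeas.nullMeasurableSet
    rw [hψΦ, Set.preimage_image_eq _ hψinj] at h2
    exact h2.symm
  have hvolB : volume B = volume H := by
    have h2 := hmp.measure_preimage hBmeas.nullMeasurableSet
    rw [hψΦ, Set.preimage_image_eq _ hψinj] at h2
    exact h2.symm
  -- projection interval
  set B1 := Prod.fst '' B with hB1def
  have hB1comp : IsCompact B1 := hBcomp.image continuous_fst
  have hB1ne : B1.Nonempty := ⟨(ψ P).1, ψ P, mem_image_of_mem _ hP, rfl⟩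
  set m := sInf B1 with hmdef
  set M := sSup B1 with hMdef
  have hmemB1 : ∀ h ∈ H, m ≤ ⟪w, h⟫ ∧ ⟪w, h⟫ ≤ M := by
    intro h hh
    have : ⟪w, h⟫ ∈ B1 := ⟨ψ h, mem_image_of_mem _ hh, rfl⟩
    exact ⟨csInf_le hB1comp.bddBelow this, le_csSup hB1comp.bddAbove this⟩
  set p := ⟪w, P⟫ with hpdef
  have hpmem : m ≤ p ∧ p ≤ M := hmemB1 P hP
  have hmM : m ≤ M := le_trans hpmem.1 hpmem.2
  -- M - m ≤ D
  have hMmD : M - m ≤ D := by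
    obtain ⟨q1, hq1B, hq1⟩ := hB1comp.sInf_mem hB1ne
    obtain ⟨q2, hq2B, hq2⟩ := hB1comp.sSup_mem hB1ne
    obtain ⟨h1, hh1, rfl⟩ := hq1B
    obtain ⟨h2, hh2, rfl⟩ := hq2B
    have e1 : (ψ h1).1 = ⟪w, h1⟫ := rfl
    have e2 : (ψ h2).1 = ⟪w, h2⟫ := rfl
    have e1' : ⟪w, h1⟫ = m := by rw [← e1, hq1, hmdef]
    have e2' : ⟪w, h2⟫ = M := by rw [← e2, hq2, hMdef]
    have h3 : M - m = ⟪w, h2 - h1⟫ := by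
      rw [inner_sub_right, e1', e2']
    have h4 : ⟪w, h2 - h1⟫ ≤ ‖w‖ * ‖h2 - h1‖ := real_inner_le_norm _ _
    have h5 : ‖h2 - h1‖ = dist h2 h1 := (dist_eq_norm _ _).symm
    have h6 : dist h2 h1 ≤ diam H := dist_le_diam_of_mem hHcomp.isBounded hh2 hh1
    have h7 : diam H = diam (S ∪ {P}) := convexHull_diam _
    have h8 : diam (S ∪ {P}) ≤ diam (S ∪ {P, P'}) :=
      diam_mono (union_subset_union_right S (by simp)) hfinK.isBounded
    calc M - m = ⟪w, h2 - h1⟫ := h3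
      _ ≤ ‖w‖ * ‖h2 - h1‖ := h4
      _ = dist h2 h1 := by rw [hwnorm, one_mul, h5]
      _ ≤ D := le_trans h6 (by rw [h7]; exact le_trans h8 hD)
  -- decomposition of points of K
  have hdec : ∀ z ∈ K, ∃ t : ℝ, ∃ y ∈ H, 0 ≤ t ∧ t ≤ 1 ∧
      z = ((1-t) • y + t • P) + t • v := fun z hz => hull_decomp S P P' z hz
  -- key single-point analysis
  have hkey : ∀ s x : ℝ, (s, x) ∈ A → (m ≤ s ∧ s ≤ M) ∧ (Prod.mk s ⁻¹' B).Nonempty ∧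
      ∃ t : ℝ, 0 ≤ t ∧ t ≤ 1 ∧ (1-t)*m + t*p ≤ s ∧ s ≤ (1-t)*M + t*p ∧
        (x - t*n) ∈ Prod.mk s ⁻¹' B := by
    rintro s x ⟨z, hzK, hzψ⟩
    obtain ⟨t, y, hy, ht0, ht1, hzdec⟩ := hdec z hzK
    set q : EuclideanSpace ℝ (Fin 2) := (1-t) • y + t • P with hqdef
    have hh : q ∈ H := hHconv hy hP (by linarith) ht0 (by ring)
    have hψz : (s, x) = (⟪w, q⟫, ⟪v', q⟫ + t * n) := by
      rw [← hzψ, hzdec, map_add, _root_.map_smul, hψ q, hψ v, hwv, hv'v,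
        Prod.smul_mk, Prod.mk_add_mk, smul_zero, add_zero, smul_eq_mul]
    simp only [Prod.mk.injEq] at hψz
    obtain ⟨hs1, hx1⟩ := hψz
    have hsy : s = (1-t) * ⟪w, y⟫ + t * p := by
      rw [hs1, hqdef, inner_add_right, real_inner_smul_right, real_inner_smul_right, hpdef]
    have hy1 := hmemB1 y hy
    have hBmem : (s, x - t*n) ∈ B := by
      have hq2 : ψ q = (s, x - t*n) := by
        rw [hψ q, Prod.mk.injEq]
        exact ⟨hs1.symm, by rw [hx1]; ring⟩
      exact hq2 ▸ mem_image_of_mem _ hh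
    obtain ⟨⟨g1, g2⟩, g3, g4⟩ :=
      combo_bounds t (⟪w, y⟫) p m M s ht0 ht1 hsy hy1.1 hy1.2 hpmem.1 hpmem.2
    exact ⟨⟨g1, g2⟩, ⟨x - t*n, hBmem⟩, t, ht0, ht1, g3, g4, hBmem⟩
  -- the width function
  set τ : ℝ → ℝ := fun s => if s ≤ p then (s - m)/(p - m) else (M - s)/(M - p) with hτdef
  have hτmeas : Measurable τ := by
    apply Measurable.ite (measurableSet_le measurable_id measurable_const)
    · exact (measurable_id.sub measurable_const).div_const _
    · exact (measurable_const.sub measurable_id).div_const _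
  -- slice bound
  have hbound : ∀ s : ℝ, s ≠ m → volume (Prod.mk s ⁻¹' A) ≤ volume (Prod.mk s ⁻¹' B) +
      (Icc m M).indicator (fun s => ENNReal.ofReal (n * τ s)) s := by
    intro s hs
    rcases eq_empty_or_nonempty (Prod.mk s ⁻¹' A) with he | hne
    · rw [he]; simp
    · obtain ⟨x0, hx0⟩ := hne
      obtain ⟨hsIcc, hBsne, _⟩ := hkey s x0 hx0
      have hIcc := slice_eq_Icc B hBcomp hBconv s hBsne
      have hτs : 0 ≤ τ s := by
        simp only [hτdef]
        by_cases hsp : s ≤ p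
        · rw [if_pos hsp]
          rcases eq_or_lt_of_le hpmem.1 with he2 | hlt
          · have : s = m := le_antisymm (he2 ▸ hsp) hsIcc.1
            exact absurd this hs
          · exact div_nonneg (by linarith [hsIcc.1]) (by linarith)
        · rw [if_neg hsp]
          push_neg at hsp
          exact div_nonneg (by linarith [hsIcc.2]) (by linarith [hsIcc.2])
      have hsub : Prod.mk s ⁻¹' A ⊆
          Icc (sInf (Prod.mk s ⁻¹' B)) (sSup (Prod.mk s ⁻¹' B) + n * τ s) := by
        intro x hx
        obtain ⟨_, _, t, ht0, ht1, hl, hr, hmem⟩ := hkey s x hx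
        have hxB := hmem
        rw [hIcc] at hxB
        have htτ : t ≤ τ s := by
          simp only [hτdef]
          by_cases hsp : s ≤ p
          · rw [if_pos hsp]
            have hmp2 : m < p := by
              rcases eq_or_lt_of_le hpmem.1 with he2 | hlt
              · exact absurd (le_antisymm (he2 ▸ hsp) hsIcc.1) hs
              · exact hlt
            rw [le_div_iff₀ (by linarith)]
            nlinarith [hl]
          · rw [if_neg hsp]
            push_neg at hsp
            have hpM : p < M := lt_of_lt_of_le hsp hsIcc.2
            rw [le_div_iff₀ (by linarith)]
            nlinarith [hr]
        have htn : t * n ≤ τ s * n := mul_le_mul_of_nonneg_right htτ hn.le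
        constructor
        · have := hxB.1
          nlinarith [mul_nonneg ht0 hn.le]
        · have := hxB.2
          nlinarith
      calc volume (Prod.mk s ⁻¹' A)
          ≤ volume (Icc (sInf (Prod.mk s ⁻¹' B)) (sSup (Prod.mk s ⁻¹' B) + n * τ s)) :=
            measure_mono hsub
        _ = ENNReal.ofReal ((sSup (Prod.mk s ⁻¹' B) - sInf (Prod.mk s ⁻¹' B)) + n * τ s) := by
            rw [Real.volume_Icc]; ring_nf
        _ ≤ ENNReal.ofReal (sSup (Prod.mk s ⁻¹' B) - sInf (Prod.mk s ⁻¹' B)) +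
              ENNReal.ofReal (n * τ s) := ENNReal.ofReal_add_le
        _ = volume (Prod.mk s ⁻¹' B) +
              (Icc m M).indicator (fun s => ENNReal.ofReal (n * τ s)) s := by
            rw [indicator_of_mem (mem_Icc.2 hsIcc)]
            conv_rhs => rw [hIcc]
            rw [Real.volume_Icc]
  -- integrate
  have hprod : (volume : Measure (ℝ×ℝ)) = (volume : Measure ℝ).prod volume := rfl
  have hAint : volume A = ∫⁻ s, volume (Prod.mk s ⁻¹' A) := by
    rw [hprod, Measure.prod_apply hAmeas]
  have hBint : volume B = ∫⁻ s, volume (Prod.mk s ⁻¹' B) := by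
    rw [hprod, Measure.prod_apply hBmeas]
  have hindmeas : Measurable ((Icc m M).indicator (fun s => ENNReal.ofReal (n * τ s))) :=
    ((measurable_const.mul hτmeas).ennreal_ofReal).indicator measurableSet_Icc
  have hae : ∀ᵐ s : ℝ, volume (Prod.mk s ⁻¹' A) ≤ volume (Prod.mk s ⁻¹' B) +
      (Icc m M).indicator (fun s => ENNReal.ofReal (n * τ s)) s := by
    have h0 : volume ({m} : Set ℝ) = 0 := Real.volume_singleton
    filter_upwards [compl_mem_ae_iff.2 h0] with s hs
    exact hbound s hs
  -- computing the integral of τ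
  have hτint : ∫⁻ s in Icc m M, ENNReal.ofReal (n * τ s) ≤ ENNReal.ofReal (1/2 * D * δ) := by
    have hτ1 : ∀ s ∈ Icc m M, τ s ≤ 1 := by
      intro s hsmem
      rw [mem_Icc] at hsmem
      simp only [hτdef]
      by_cases hsp : s ≤ p
      · rw [if_pos hsp]
        rcases eq_or_lt_of_le hpmem.1 with he2 | hlt
        · rw [← he2, sub_self, div_zero]; norm_num
        · rw [div_le_one (by linarith)]; linarith
      · rw [if_neg hsp]
        push_neg at hsp
        have hpM : p < M := lt_of_lt_of_le hsp hsmem.2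
        rw [div_le_one (by linarith)]; linarith
    have hτ0 : ∀ s ∈ Icc m M, 0 ≤ τ s := by
      intro s hsmem
      rw [mem_Icc] at hsmem
      simp only [hτdef]
      by_cases hsp : s ≤ p
      · rw [if_pos hsp]
        rcases eq_or_lt_of_le hpmem.1 with he2 | hlt
        · rw [← he2, sub_self, div_zero]
        · exact div_nonneg (by linarith) (by linarith)
      · rw [if_neg hsp]
        push_neg at hsp
        exact div_nonneg (by linarith [hsmem.2]) (by linarith [hsmem.2])
    have hInt : IntegrableOn (fun s => n * τ s) (Icc m M) := by
      apply Measure.integrableOn_of_bounded (measure_Icc_lt_top).ne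
        ((measurable_const.mul hτmeas).aestronglyMeasurable)
      · refine (ae_restrict_iff' measurableSet_Icc).2 (ae_of_all _ fun s hsmem => ?_)
        show ‖n * τ s‖ ≤ _
        rw [Real.norm_eq_abs, abs_mul, abs_of_nonneg hn.le,
          abs_of_nonneg (hτ0 s hsmem)]
        exact mul_le_mul_of_nonneg_left (hτ1 s hsmem) hn.le
    have hnn : 0 ≤ᵐ[volume.restrict (Icc m M)] fun s => n * τ s :=
      (ae_restrict_iff' measurableSet_Icc).2
        (ae_of_all _ fun s hsmem => mul_nonneg hn.le (hτ0 s hsmem))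
    rw [← ofReal_integral_eq_lintegral_ofReal hInt hnn]
    apply ENNReal.ofReal_le_ofReal
    -- compute the integral
    have hg1 : IntervalIntegrable (fun s => (s - m)/(p - m)) volume m p :=
      (((continuous_id.sub continuous_const).div_const _)).intervalIntegrable _ _
    have hg2 : IntervalIntegrable (fun s => (M - s)/(M - p)) volume p M :=
      (((continuous_const.sub continuous_id).div_const _)).intervalIntegrable _ _
    have heq1 : EqOn τ (fun s => (s - m)/(p - m)) (Ioc m p) := fun s hs => by
      simp only [hτdef]; rw [if_pos hs.2]
    have heq2 : EqOn τ (fun s => (M - s)/(M - p)) (Ioc p M) := fun s hs => by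
      simp only [hτdef]; rw [if_neg (not_le.2 hs.1)]
    have hτi1 : IntervalIntegrable τ volume m p := by
      rw [intervalIntegrable_iff_integrableOn_Ioc_of_le hpmem.1]
      exact ((intervalIntegrable_iff_integrableOn_Ioc_of_le hpmem.1).1 hg1).congr_fun
        heq1.symm measurableSet_Ioc
    have hτi2 : IntervalIntegrable τ volume p M := by
      rw [intervalIntegrable_iff_integrableOn_Ioc_of_le hpmem.2]
      exact ((intervalIntegrable_iff_integrableOn_Ioc_of_le hpmem.2).1 hg2).congr_fun
        heq2.symm measurableSet_Ioc
    have haux1 : ∫ s in m..p, (s - m) = (p - m)^2/2 := by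
      rw [intervalIntegral.integral_comp_sub_right (fun x => x) m]
      simp [integral_id]
    have haux2 : ∫ s in p..M, (M - s) = (M - p)^2/2 := by
      rw [intervalIntegral.integral_comp_sub_left (fun x => x) M]
      simp [integral_id]
    have hint1 : ∫ s in m..p, τ s = (p - m)/2 := by
      rw [intervalIntegral.integral_of_le hpmem.1, setIntegral_congr_fun measurableSet_Ioc heq1,
        ← intervalIntegral.integral_of_le hpmem.1, intervalIntegral.integral_div, haux1,
        sq_half_div]
    have hint2 : ∫ s in p..M, τ s = (M - p)/2 := by
      rw [intervalIntegral.integral_of_le hpmem.2, setIntegral_congr_fun measurableSet_Ioc heq2,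
        ← intervalIntegral.integral_of_le hpmem.2, intervalIntegral.integral_div, haux2,
        sq_half_div]
    have hsplit : ∫ s in Icc m M, n * τ s = n * ((p - m)/2 + (M - p)/2) := by
      rw [MeasureTheory.integral_const_mul]
      congr 1
      rw [integral_Icc_eq_integral_Ioc, ← intervalIntegral.integral_of_le hmM,
        ← intervalIntegral.integral_add_adjacent_intervals hτi1 hτi2, hint1, hint2]
    rw [hsplit]
    have hDδ : (M - m) * n ≤ D * δ :=
      mul_le_mul hMmD hnδ hn.le (le_trans (sub_nonneg.2 hmM) hMmD)
    nlinarith [hDδ]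
  -- final assembly
  calc volume K = volume A := hvolA.symm
    _ = ∫⁻ s, volume (Prod.mk s ⁻¹' A) := hAint
    _ ≤ ∫⁻ s, (volume (Prod.mk s ⁻¹' B) +
          (Icc m M).indicator (fun s => ENNReal.ofReal (n * τ s)) s) := lintegral_mono_ae hae
    _ = (∫⁻ s, volume (Prod.mk s ⁻¹' B)) +
          ∫⁻ s, (Icc m M).indicator (fun s => ENNReal.ofReal (n * τ s)) s :=
        lintegral_add_right _ hindmeas
    _ = volume B + ∫⁻ s in Icc m M, ENNReal.ofReal (n * τ s) := by
        rw [← hBint, lintegral_indicator measurableSet_Icc]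
    _ ≤ volume H + ENNReal.ofReal (1/2 * D * δ) := add_le_add (le_of_eq hvolB) hτint

/-- If `H` is the convex hull of a finite set `S ∪ {P}` of diameter at most `D`
(together with `P'`), and `P` is replaced by `P'` with `|P P'| ≤ δ`, the convex hull
area changes by at most `(1/2)·D·δ`. -/
theorem stmt_15 (S : Set (EuclideanSpace ℝ (Fin 2))) (hS : S.Finite)
    (P P' : EuclideanSpace ℝ (Fin 2)) (D δ : ℝ)
    (hD : Metric.diam (S ∪ {P, P'}) ≤ D) (hδ : dist P P' ≤ δ) :
    |(volume (convexHull ℝ (S ∪ {P}))).toReal -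
      (volume (convexHull ℝ (S ∪ {P'}))).toReal| ≤ (1 / 2) * D * δ := by
  have hc0 : 0 ≤ 1/2 * D * δ := by
    have h1 : 0 ≤ D := le_trans diam_nonneg hD
    have h2 : 0 ≤ δ := le_trans dist_nonneg hδ
    positivity
  have hD' : Metric.diam (S ∪ {P', P}) ≤ D := by rw [pair_comm P' P]; exact hD
  have hδ' : dist P' P ≤ δ := by rw [dist_comm]; exact hδ
  have h1 := core_ineq S hS P P' D δ hD hδ
  have h2 := core_ineq S hS P' P D δ hD' hδ'
  rw [pair_comm P' P] at h2
  have hfinK : (S ∪ {P, P'}).Finite := hS.union (by simp)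
  have hKfin : volume (convexHull ℝ (S ∪ {P, P'})) ≠ ⊤ :=
    (hfinK.isCompact_convexHull ℝ).measure_lt_top.ne
  have hH1 : volume (convexHull ℝ (S ∪ {P})) ≤ volume (convexHull ℝ (S ∪ {P, P'})) :=
    measure_mono (convexHull_mono (union_subset_union_right S (by simp)))
  have hH2 : volume (convexHull ℝ (S ∪ {P'})) ≤ volume (convexHull ℝ (S ∪ {P, P'})) :=
    measure_mono (convexHull_mono (union_subset_union_right S (by simp)))
  have hHfin : volume (convexHull ℝ (S ∪ {P})) ≠ ⊤ :=
    (lt_of_le_of_lt hH1 (lt_top_iff_ne_top.2 hKfin)).ne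
  have hH'fin : volume (convexHull ℝ (S ∪ {P'})) ≠ ⊤ :=
    (lt_of_le_of_lt hH2 (lt_top_iff_ne_top.2 hKfin)).ne
  have ha1 : (volume (convexHull ℝ (S ∪ {P}))).toReal ≤
      (volume (convexHull ℝ (S ∪ {P, P'}))).toReal := ENNReal.toReal_mono hKfin hH1
  have ha2 : (volume (convexHull ℝ (S ∪ {P'}))).toReal ≤
      (volume (convexHull ℝ (S ∪ {P, P'}))).toReal := ENNReal.toReal_mono hKfin hH2
  have hk1 : (volume (convexHull ℝ (S ∪ {P, P'}))).toReal ≤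
      (volume (convexHull ℝ (S ∪ {P}))).toReal + 1/2*D*δ := by
    have h3 := ENNReal.toReal_mono
      (by exact ENNReal.add_ne_top.2 ⟨hHfin, ENNReal.ofReal_ne_top⟩) h1
    rwa [ENNReal.toReal_add hHfin ENNReal.ofReal_ne_top, ENNReal.toReal_ofReal hc0] at h3
  have hk2 : (volume (convexHull ℝ (S ∪ {P, P'}))).toReal ≤
      (volume (convexHull ℝ (S ∪ {P'}))).toReal + 1/2*D*δ := by
    have h3 := ENNReal.toReal_mono
      (by exact ENNReal.add_ne_top.2 ⟨hH'fin, ENNReal.ofReal_ne_top⟩) h2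
    rwa [ENNReal.toReal_add hH'fin ENNReal.ofReal_ne_top, ENNReal.toReal_ofReal hc0] at h3
  rw [abs_sub_le_iff]
  constructor <;> linarith
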